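/- Let n ≥ 5 and let T be a tournament on n+1 vertices containing no copy of CP(2,2;n−4). Suppose v_1,…,v_{n−1} are distinct vertices of T such that (v_1,v_2),(v_1,v_3),(v_2,v_3),(v_2,v_4),(v_3,v_4) and (v_i,v_{i+1}) for 4 ≤ i ≤ n−2 are all arcs of T, and let v be any of the two vertices of T not among v_1,…,v_{n−1}. Then: if (v_1,v) is an arc of T then (v_3,v) is an arc of T, and if (v,v_1) is an arc of T then (v_2,v) is an arc of T. -/

import Mathlib

/-- A tournament: an irreflexive relation such that for any two distinct
vertices exactly one of the two possible arcs is present. -/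
def IsTournament {V : Type*} (r : V → V → Prop) : Prop :=
  (∀ x, ¬ r x x) ∧ ∀ x y, x ≠ y → (r x y ↔ ¬ r y x)

/-- `Contains r e` : the digraph `r` contains a copy of the oriented graph `e`. -/
def Contains {V : Type*} {H : Type*} (r : V → V → Prop) (e : H → H → Prop) : Prop :=
  ∃ φ : H → V, Function.Injective φ ∧ ∀ u v, e u v → r (φ u) (φ v)

/-- The antidirected cycle `AC_{2k}` on `ZMod (2k)`: the arcs go from each
even vertex `u` to its two neighbours `u + 1` and `u - 1` on the cycle. -/
def acArc (k : ℕ) (u v : ZMod (2 * k)) : Prop :=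
  (∃ j : ZMod (2 * k), u = 2 * j) ∧ (v = u + 1 ∨ v = u - 1)

/-- `CP(2,2;ℓ)`: the oriented graph on `ℓ + 4` vertices (0-indexed; vertex
`v_i` of the paper is index `i - 1`) with arcs
`(0,1), (0,2), (1,3), (2,3)` and `(j, j+1)` for `3 ≤ j`. In particular
`cpArc 0` is the oriented 4-cycle `C(2,2)`. -/
def cpArc (ℓ : ℕ) (u v : Fin (ℓ + 4)) : Prop :=
  (u.val = 0 ∧ v.val = 1) ∨ (u.val = 0 ∧ v.val = 2) ∨
  (u.val = 1 ∧ v.val = 3) ∨ (u.val = 2 ∧ v.val = 3) ∨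
  (3 ≤ u.val ∧ v.val = u.val + 1)

/-- Claim 3 in the proof of Theorem 3: let `n ≥ 5` and let `T` be a tournament
on `n + 1` vertices with no copy of `CP(2,2; n-4)`. Suppose the distinct
vertices `w 0, …, w (n-2)` (the paper's `v_1, …, v_{n-1}`) form a copy of
`CP(2,2; n-5)` together with the extra arc `(v_2, v_3)`, and `v` is not among
them. Then: if `v_1` dominates `v` then so does `v_3`, and if `v` dominates
`v_1` then `v_2` dominates `v`. -/
theorem claim_v1_v2_v3 (n : ℕ) (hn : 5 ≤ n)
    (V : Type) (_ : Fintype V) (r : V → V → Prop) (ht : IsTournament r)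
    (hcard : Fintype.card V = n + 1)
    (hno : ¬ Contains r (cpArc (n - 4)))
    (w : Fin (n - 1) → V) (hinj : Function.Injective w)
    (h01 : r (w ⟨0, by omega⟩) (w ⟨1, by omega⟩))
    (h02 : r (w ⟨0, by omega⟩) (w ⟨2, by omega⟩))
    (h12 : r (w ⟨1, by omega⟩) (w ⟨2, by omega⟩))
    (h13 : r (w ⟨1, by omega⟩) (w ⟨3, by omega⟩))
    (h23 : r (w ⟨2, by omega⟩) (w ⟨3, by omega⟩))
    (hpath : ∀ i : Fin (n - 1), ∀ h : i.val + 1 < n - 1, 3 ≤ i.val →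
      r (w i) (w ⟨i.val + 1, h⟩))
    (v : V) (hv : v ∉ Set.range w) :
    (r (w ⟨0, by omega⟩) v → r (w ⟨2, by omega⟩) v) ∧
    (r v (w ⟨0, by omega⟩) → r (w ⟨1, by omega⟩) v) := by
  obtain ⟨hirr, htour⟩ := ht
  have hvne : ∀ i : Fin (n - 1), v ≠ w i := fun i h => hv ⟨i, h.symm⟩
  have hwval : ∀ i j : Fin (n - 1), w i = w j → i.val = j.val := by
    intro i j h
    exact Fin.val_eq_of_eq (hinj h)
  constructor
  · -- first part
    intro h0v
    by_contra h2v
    have hv2 : r v (w ⟨2, by omega⟩) := (htour v _ (hvne _)).mpr h2v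
    apply hno
    refine ⟨fun j => if j.val = 0 then w ⟨0, by omega⟩ else if j.val = 1 then v
        else w ⟨j.val - 1, by have := j.isLt; omega⟩, ?_, ?_⟩
    · intro a b hab
      dsimp only at hab
      split_ifs at hab with ha0 hb0 hb1 ha1 hb0' hb1' hb0'' hb1''
      · exact Fin.ext (by omega)
      · exact absurd hab.symm (hvne _)
      · have := hwval _ _ hab; simp at this; omega
      · exact absurd hab (hvne _)
      · exact Fin.ext (by omega)
      · exact absurd hab (hvne _)
      · have := hwval _ _ hab; simp at this; omega
      · exact absurd hab.symm (hvne _)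
      · have := hwval _ _ hab; simp only at this; exact Fin.ext (by omega)
    · intro a b harc
      rcases harc with ⟨ha, hb⟩ | ⟨ha, hb⟩ | ⟨ha, hb⟩ | ⟨ha, hb⟩ | ⟨ha, hb⟩ <;>
        simp only [ha, hb] <;> norm_num
      · exact h0v
      · exact h01
      · exact hv2
      · exact h12
      · have hbl := b.isLt
        have hna : ¬ a.val = 0 := by omega
        have hna1 : ¬ a.val = 1 := by omega
        have hnb : ¬ a.val + 1 = 0 := by omega
        have hnb1 : ¬ a.val + 1 = 1 := by omega
        simp only [hna, hna1, hnb, hnb1, if_false, show a ≠ 0 from fun h => hna (by subst h; simp)]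
        rcases eq_or_lt_of_le ha with h3 | h4
        · have : a.val - 1 = 2 := by omega
          convert h23 using 2 <;> exact Fin.ext (by simp; omega)
        · have key := hpath ⟨a.val - 1, by omega⟩ (by simp; omega) (by simp; omega)
          convert key using 2 <;> exact Fin.ext (by simp; omega)
  · -- second part
    intro hv0
    by_contra h1v
    have hv1 : r v (w ⟨1, by omega⟩) := (htour v _ (hvne _)).mpr h1v
    apply hno
    refine ⟨fun j => if j.val = 0 then v
        else w ⟨j.val - 1, by have := j.isLt; omega⟩, ?_, ?_⟩
    · intro a b hab
      dsimp only at hab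
      split_ifs at hab with ha0 hb0 hb0'
      · exact Fin.ext (by omega)
      · exact absurd hab (hvne _)
      · exact absurd hab.symm (hvne _)
      · have := hwval _ _ hab; simp only at this; exact Fin.ext (by omega)
    · intro a b harc
      rcases harc with ⟨ha, hb⟩ | ⟨ha, hb⟩ | ⟨ha, hb⟩ | ⟨ha, hb⟩ | ⟨ha, hb⟩ <;>
        simp only [ha, hb] <;> norm_num
      · exact hv0
      · exact hv1
      · exact h02
      · exact h12
      · have hbl := b.isLt
        have hna : ¬ a.val = 0 := by omega
        have hnb : ¬ a.val + 1 = 0 := by omega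
        simp only [hna, hnb, if_false, show a ≠ 0 from fun h => hna (by subst h; simp)]
        rcases eq_or_lt_of_le ha with h3 | h4
        · have : a.val - 1 = 2 := by omega
          convert h23 using 2 <;> exact Fin.ext (by simp; omega)
        · have key := hpath ⟨a.val - 1, by omega⟩ (by simp; omega) (by simp; omega)
          convert key using 2 <;> exact Fin.ext (by simp; omega)
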